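/- Applying the two-outcome joint measurement in the basis {XZ, ZX} to qubits C and D of the product of two 2-qubit cluster states |ψ⟩_AC ⊗ |ψ⟩_BD, where |ψ⟩ = (|0+⟩ + |1−⟩)/√2, projects qubits A and B onto a state that is equal to |ψ⟩_AB up to a local Pauli (X or Z) correction depending on the measurement outcome. -/
import Mathlib


open scoped BigOperators

/-- Bit flip on `Fin 2`. -/
def bitflip : Fin 2 → Fin 2 := fun i => if i = 0 then 1 else 0

/-- Sign `(-1)^i` as a complex number. -/
def bitsign : Fin 2 → ℂ := fun i => if i = 0 then 1 else -1

/-- Amplitudes of the two-qubit cluster state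
`|ψ⟩ = (|0+⟩ + |1−⟩)/√2 = (|00⟩ + |01⟩ + |10⟩ − |11⟩)/2`. -/
noncomputable def clusterψ : Fin 2 → Fin 2 → ℂ :=
  fun a c => (1 / 2 : ℂ) * (if a = 1 then (if c = 1 then -1 else 1) else 1)

/-- Pauli `X`. -/
def pauliX : Matrix (Fin 2) (Fin 2) ℂ := !![0, 1; 1, 0]

/-- Pauli `Z`. -/
def pauliZ : Matrix (Fin 2) (Fin 2) ℂ := !![1, 0; 0, -1]

/-- The local Pauli corrections `{I, X, Z}`. -/
def pauliSet : Set (Matrix (Fin 2) (Fin 2) ℂ) := {1, pauliX, pauliZ}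

/-- The fusion (`XZ, ZX` joint measurement) applied to qubits `C`, `D` of
`|ψ⟩_AC ⊗ |ψ⟩_BD`: for each outcome `(ε₁, ε₂) ∈ {±1}²`, projecting qubits `C`, `D`
onto the joint eigenvector `χ` of `X_C Z_D` and `Z_C X_D` with eigenvalues `ε₁, ε₂`
leaves qubits `A`, `B` in the (unnormalized) state `(P ⊗ Q)|ψ⟩_AB` — up to a nonzero
scalar — for some local Pauli corrections `P, Q ∈ {I, X, Z}` determined by the
measurement outcome. -/
theorem fusion_outcome (ε₁ ε₂ : ℂ) (hε₁ : ε₁ = 1 ∨ ε₁ = -1) (hε₂ : ε₂ = 1 ∨ ε₂ = -1)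
    (χ : Fin 2 → Fin 2 → ℂ) (hχ : χ ≠ 0)
    (hXZ : ∀ c d, bitsign d * χ (bitflip c) d = ε₁ * χ c d)
    (hZX : ∀ c d, bitsign c * χ c (bitflip d) = ε₂ * χ c d) :
    ∃ P ∈ pauliSet, ∃ Q ∈ pauliSet, ∃ lam : ℂ, lam ≠ 0 ∧
      ∀ a b : Fin 2,
        (∑ c : Fin 2, ∑ d : Fin 2,
            (starRingEnd ℂ) (χ c d) * (clusterψ a c * clusterψ b d)) =
        lam * ∑ a' : Fin 2, ∑ b' : Fin 2, P a a' * Q b b' * clusterψ a' b' := by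
  have h10 : χ 1 0 = ε₁ * χ 0 0 := by
    have := hXZ 0 0; simpa [bitflip, bitsign] using this
  have h01 : χ 0 1 = ε₂ * χ 0 0 := by
    have := hZX 0 0; simpa [bitflip, bitsign] using this
  have h11 : χ 1 1 = -(ε₁ * (ε₂ * χ 0 0)) := by
    have h := hXZ 0 1
    simp [bitflip, bitsign, h01] at h
    linear_combination -h
  have h00 : χ 0 0 ≠ 0 := by
    intro h
    apply hχ
    funext c d
    fin_cases c <;> fin_cases d <;>
      simp [h10, h01, h11, h]
  rcases hε₁ with rfl | rfl <;> rcases hε₂ with rfl | rfl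
  · refine ⟨1, Or.inl rfl, 1, Or.inl rfl, (starRingEnd ℂ) (χ 0 0), by simpa using h00, ?_⟩
    intro a b
    fin_cases a <;> fin_cases b <;>
      simp [Fin.sum_univ_two, clusterψ, h10, h01, h11, map_mul, map_neg, map_one,
        Matrix.one_apply] <;> ring
  · refine ⟨pauliZ, Or.inr (Or.inr rfl), 1, Or.inl rfl, (starRingEnd ℂ) (χ 0 0), by simpa using h00, ?_⟩
    intro a b
    fin_cases a <;> fin_cases b <;>
      simp [Fin.sum_univ_two, clusterψ, pauliZ, h10, h01, h11, map_mul, map_neg, map_one,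
        Matrix.one_apply] <;> ring
  · refine ⟨1, Or.inl rfl, pauliZ, Or.inr (Or.inr rfl), (starRingEnd ℂ) (χ 0 0), by simpa using h00, ?_⟩
    intro a b
    fin_cases a <;> fin_cases b <;>
      simp [Fin.sum_univ_two, clusterψ, pauliZ, h10, h01, h11, map_mul, map_neg, map_one,
        Matrix.one_apply] <;> ring
  · refine ⟨pauliX, Or.inr (Or.inl rfl), pauliX, Or.inr (Or.inl rfl), (starRingEnd ℂ) (χ 0 0), by simpa using h00, ?_⟩
    intro a b
    fin_cases a <;> fin_cases b <;>
      simp [Fin.sum_univ_two, clusterψ, pauliX, h10, h01, h11, map_mul, map_neg, map_one,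
        Matrix.one_apply] <;> ring
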